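/- Let Ω ⊆ ℝ^N be a bounded domain, K ∈ L^∞(Ω×Ω) symmetric nonnegative, a bounded continuous, and let λ₊ = sup over nonzero φ ∈ L²(Ω) of ⟨L_Ω φ + aφ, φ⟩ / ‖φ‖²_{L²}. If φ ∈ L²(Ω) attains λ₊, i.e. ⟨L_Ω φ + aφ, φ⟩ = λ₊ ‖φ‖², then its positive part φ⁺ also attains λ₊ (provided φ⁺ ≢ 0). In particular the maximizer can be taken nonnegative. -/

import Mathlib

open MeasureTheory Filter Metric Set
open scoped Topology

noncomputable section

/-- The quadratic form `Q(φ) = ⟨L_Ω φ + aφ, φ⟩ = ∬ K(x,y)φ(x)φ(y) + ∫ a φ²`. -/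
def quadForm (N : ℕ) (Ω : Set (EuclideanSpace ℝ (Fin N)))
    (K : EuclideanSpace ℝ (Fin N) → EuclideanSpace ℝ (Fin N) → ℝ)
    (a : EuclideanSpace ℝ (Fin N) → ℝ)
    (φ : EuclideanSpace ℝ (Fin N) → ℝ) : ℝ :=
  (∫ x in Ω, ∫ y in Ω, K x y * φ x * φ y) + ∫ x in Ω, a x * (φ x) ^ 2

/-- If a maximizer `φ` of the Rayleigh quotient `Q(φ)/‖φ‖²` exists, then its
positive part `φ⁺ = max(φ, 0)` is also a maximizer (provided `φ⁺ ≢ 0`). -/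
theorem stmt6 (N : ℕ)
    (Ω : Set (EuclideanSpace ℝ (Fin N)))
    (K : EuclideanSpace ℝ (Fin N) → EuclideanSpace ℝ (Fin N) → ℝ)
    (a : EuclideanSpace ℝ (Fin N) → ℝ)
    (hΩo : IsOpen Ω) (hΩc : IsConnected Ω) (hΩne : Ω.Nonempty)
    (hΩb : Bornology.IsBounded Ω)
    (hK0 : ∀ x y, 0 ≤ K x y)
    (hKsym : ∀ x y, K x y = K y x)
    (hKmeas : Measurable (fun p : EuclideanSpace ℝ (Fin N) × EuclideanSpace ℝ (Fin N) => K p.1 p.2))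
    (hKB : ∃ M, ∀ x y, K x y ≤ M)
    (hac : ContinuousOn a Ω) (haB : ∃ M, ∀ x ∈ Ω, |a x| ≤ M)
    (lplus : ℝ)
    (hsup : ∀ ψ : EuclideanSpace ℝ (Fin N) → ℝ, MemLp ψ 2 (volume.restrict Ω) →
      (∫ x in Ω, (ψ x) ^ 2) ≠ 0 →
      quadForm N Ω K a ψ ≤ lplus * ∫ x in Ω, (ψ x) ^ 2)
    (φ : EuclideanSpace ℝ (Fin N) → ℝ)
    (hφ : MemLp φ 2 (volume.restrict Ω))
    (heq : quadForm N Ω K a φ = lplus * ∫ x in Ω, (φ x) ^ 2)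
    (hplus : (∫ x in Ω, (max (φ x) 0) ^ 2) ≠ 0) :
    quadForm N Ω K a (fun x => max (φ x) 0) =
      lplus * ∫ x in Ω, (max (φ x) 0) ^ 2 := by
  classical
  obtain ⟨M, hM⟩ := hKB
  obtain ⟨Ma, hMa⟩ := haB
  set p : EuclideanSpace ℝ (Fin N) → ℝ := fun x => max (φ x) 0 with hp_def
  set m : EuclideanSpace ℝ (Fin N) → ℝ := fun x => max (-φ x) 0 with hm_def
  have hΩm : MeasurableSet Ω := hΩo.measurableSet
  set μ : Measure (EuclideanSpace ℝ (Fin N)) := volume.restrict Ω with hμ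
  have hfin : IsFiniteMeasure μ := ⟨by
    rw [hμ, Measure.restrict_apply_univ]; exact hΩb.measure_lt_top⟩
  have hp2 : MemLp p 2 μ := hφ.pos_part
  have hm2 : MemLp m 2 μ := hφ.neg_part
  -- pointwise identities
  have hpm : ∀ x, φ x = p x - m x := fun x => by
    simp only [hp_def, hm_def]
    rcases le_total 0 (φ x) with h | h
    · rw [max_eq_left h, max_eq_right (neg_nonpos.2 h)]; ring
    · rw [max_eq_right h, max_eq_left (neg_nonneg.2 h)]; ring
  have hsq : ∀ x, φ x ^ 2 = p x ^ 2 + m x ^ 2 := fun x => by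
    simp only [hp_def, hm_def]
    rcases le_total 0 (φ x) with h | h
    · rw [max_eq_left h, max_eq_right (neg_nonpos.2 h)]; ring
    · rw [max_eq_right h, max_eq_left (neg_nonneg.2 h)]; ring
  have hp0 : ∀ x, 0 ≤ p x := fun x => le_max_right _ _
  have hm0 : ∀ x, 0 ≤ m x := fun x => le_max_right _ _
  -- integrability of product integrands
  have hint : ∀ f g : EuclideanSpace ℝ (Fin N) → ℝ, MemLp f 2 μ → MemLp g 2 μ →
      Integrable (fun z : EuclideanSpace ℝ (Fin N) × EuclideanSpace ℝ (Fin N) =>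
        K z.1 z.2 * f z.1 * g z.2) (μ.prod μ) := by
    intro f g hf hg
    have hfi : Integrable f μ :=
      memLp_one_iff_integrable.1 (hf.mono_exponent one_le_two)
    have hgi : Integrable g μ :=
      memLp_one_iff_integrable.1 (hg.mono_exponent one_le_two)
    have hbig : Integrable
        (fun z : EuclideanSpace ℝ (Fin N) × EuclideanSpace ℝ (Fin N) =>
          M * (|f z.1| * |g z.2|)) (μ.prod μ) :=
      (hfi.abs.mul_prod hgi.abs).const_mul M
    refine hbig.mono' ?_ ?_
    · exact ((hKmeas.aestronglyMeasurable.mul hf.1.comp_fst).mul hg.1.comp_snd).congr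
        (Eventually.of_forall fun z => rfl)
    · refine Eventually.of_forall fun z => ?_
      rw [Real.norm_eq_abs, abs_mul, abs_mul, abs_of_nonneg (hK0 _ _), mul_assoc]
      exact mul_le_mul_of_nonneg_right (hM _ _)
        (mul_nonneg (abs_nonneg _) (abs_nonneg _))
  -- iterated integral equals product integral
  have hiter : ∀ f g : EuclideanSpace ℝ (Fin N) → ℝ, MemLp f 2 μ → MemLp g 2 μ →
      (∫ x in Ω, ∫ y in Ω, K x y * f x * g y) =
        ∫ z : EuclideanSpace ℝ (Fin N) × EuclideanSpace ℝ (Fin N),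
          K z.1 z.2 * f z.1 * g z.2 ∂(μ.prod μ) := by
    intro f g hf hg
    exact integral_integral (hint f g hf hg)
  have i1 := hint p p hp2 hp2
  have i2 := hint m m hm2 hm2
  have i3 := hint p m hp2 hm2
  have i4 := hint m p hm2 hp2
  have i12 : Integrable (fun z : EuclideanSpace ℝ (Fin N) × EuclideanSpace ℝ (Fin N) =>
      K z.1 z.2 * p z.1 * p z.2 + K z.1 z.2 * m z.1 * m z.2) (μ.prod μ) := i1.add i2
  have i123 : Integrable (fun z : EuclideanSpace ℝ (Fin N) × EuclideanSpace ℝ (Fin N) =>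
      K z.1 z.2 * p z.1 * p z.2 + K z.1 z.2 * m z.1 * m z.2 - K z.1 z.2 * p z.1 * m z.2)
      (μ.prod μ) := i12.sub i3
  have hIpm : 0 ≤ ∫ z : EuclideanSpace ℝ (Fin N) × EuclideanSpace ℝ (Fin N),
      K z.1 z.2 * p z.1 * m z.2 ∂(μ.prod μ) :=
    integral_nonneg fun z => mul_nonneg (mul_nonneg (hK0 _ _) (hp0 _)) (hm0 _)
  have hImp : 0 ≤ ∫ z : EuclideanSpace ℝ (Fin N) × EuclideanSpace ℝ (Fin N),
      K z.1 z.2 * m z.1 * p z.2 ∂(μ.prod μ) :=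
    integral_nonneg fun z => mul_nonneg (mul_nonneg (hK0 _ _) (hm0 _)) (hp0 _)
  have hsplit : (∫ z : EuclideanSpace ℝ (Fin N) × EuclideanSpace ℝ (Fin N),
        K z.1 z.2 * φ z.1 * φ z.2 ∂(μ.prod μ)) =
      (∫ z : EuclideanSpace ℝ (Fin N) × EuclideanSpace ℝ (Fin N),
        K z.1 z.2 * p z.1 * p z.2 ∂(μ.prod μ)) +
      (∫ z : EuclideanSpace ℝ (Fin N) × EuclideanSpace ℝ (Fin N),
        K z.1 z.2 * m z.1 * m z.2 ∂(μ.prod μ)) -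
      (∫ z : EuclideanSpace ℝ (Fin N) × EuclideanSpace ℝ (Fin N),
        K z.1 z.2 * p z.1 * m z.2 ∂(μ.prod μ)) -
      (∫ z : EuclideanSpace ℝ (Fin N) × EuclideanSpace ℝ (Fin N),
        K z.1 z.2 * m z.1 * p z.2 ∂(μ.prod μ)) := by
    have hfun : (fun z : EuclideanSpace ℝ (Fin N) × EuclideanSpace ℝ (Fin N) =>
        K z.1 z.2 * φ z.1 * φ z.2) =
        fun z => (K z.1 z.2 * p z.1 * p z.2 + K z.1 z.2 * m z.1 * m z.2) -
          K z.1 z.2 * p z.1 * m z.2 - K z.1 z.2 * m z.1 * p z.2 := by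
      funext z; rw [hpm z.1, hpm z.2]; ring
    rw [hfun, integral_sub i123 i4, integral_sub i12 i3, integral_add i1 i2]
  -- a-term integrability
  have haInt : ∀ f : EuclideanSpace ℝ (Fin N) → ℝ, MemLp f 2 μ →
      Integrable (fun x => a x * f x ^ 2) μ := by
    intro f hf
    have hsqi : Integrable (fun x => f x ^ 2) μ := hf.integrable_sq
    refine (hsqi.const_mul Ma).mono' ?_ ?_
    · exact ((hac.aemeasurable hΩm).aestronglyMeasurable).mul
        ((hf.1.mul hf.1).congr (Eventually.of_forall fun x => (sq (f x)).symm))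
    · filter_upwards [ae_restrict_mem hΩm] with x hx
      rw [Real.norm_eq_abs, abs_mul, abs_of_nonneg (sq_nonneg (f x))]
      exact mul_le_mul_of_nonneg_right (hMa x hx) (sq_nonneg _)
  have hasplit : (∫ x in Ω, a x * φ x ^ 2) =
      (∫ x in Ω, a x * p x ^ 2) + ∫ x in Ω, a x * m x ^ 2 := by
    have hfun : (fun x => a x * φ x ^ 2) =
        fun x => a x * p x ^ 2 + a x * m x ^ 2 := by
      funext x; rw [hsq x]; ring
    rw [hfun, integral_add (haInt p hp2) (haInt m hm2)]
  have hnormsplit : (∫ x in Ω, φ x ^ 2) = (∫ x in Ω, p x ^ 2) + ∫ x in Ω, m x ^ 2 := by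
    have hfun : (fun x => φ x ^ 2) = fun x => p x ^ 2 + m x ^ 2 := funext hsq
    rw [hfun, integral_add hp2.integrable_sq hm2.integrable_sq]
  -- quadForm decomposition
  have hQ : quadForm N Ω K a φ = quadForm N Ω K a p + quadForm N Ω K a m -
      ((∫ z : EuclideanSpace ℝ (Fin N) × EuclideanSpace ℝ (Fin N),
          K z.1 z.2 * p z.1 * m z.2 ∂(μ.prod μ)) +
       (∫ z : EuclideanSpace ℝ (Fin N) × EuclideanSpace ℝ (Fin N),
          K z.1 z.2 * m z.1 * p z.2 ∂(μ.prod μ))) := by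
    simp only [quadForm]
    rw [hiter φ φ hφ hφ, hiter p p hp2 hp2, hiter m m hm2 hm2, hsplit, hasplit]
    ring
  have h2 : quadForm N Ω K a m ≤ lplus * ∫ x in Ω, m x ^ 2 := by
    by_cases h0 : (∫ x in Ω, m x ^ 2) = 0
    · have hm0ae : m =ᵐ[μ] 0 := by
        have := (integral_eq_zero_iff_of_nonneg (fun x => sq_nonneg (m x))
          hm2.integrable_sq).1 h0
        filter_upwards [this] with x hx
        exact (pow_eq_zero_iff two_ne_zero).mp hx
      have hQm : quadForm N Ω K a m = 0 := by
        simp only [quadForm]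
        have e1 : (∫ x in Ω, ∫ y in Ω, K x y * m x * m y) = 0 := by
          rw [show (∫ x in Ω, ∫ y in Ω, K x y * m x * m y) =
              ∫ x in Ω, (0 : ℝ) from integral_congr_ae ?_, integral_zero]
          filter_upwards [hm0ae] with x hx
          simp [hx]
        have e2 : (∫ x in Ω, a x * m x ^ 2) = 0 := by
          rw [show (∫ x in Ω, a x * m x ^ 2) = ∫ x in Ω, (0 : ℝ) from
            integral_congr_ae ?_, integral_zero]
          filter_upwards [hm0ae] with x hx
          simp [hx]
        rw [e1, e2, add_zero]
      rw [hQm, h0, mul_zero]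
    · exact hsup m hm2 h0
  have h1 : quadForm N Ω K a p ≤ lplus * ∫ x in Ω, p x ^ 2 := hsup p hp2 hplus
  rw [hnormsplit, mul_add] at heq
  linarith [hQ, hIpm, hImp]
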